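/- For Hasse–Schmidt derivations D ∈ HS_k(A; m) and D' ∈ HS_k(A; n) with m, n ≥ 1, the differential operator [D_m, D'_n] − D_{m−1} ∘ D'_{n−1} ∘ [D₁, D'₁] has order at most m + n − 2. -/

import Mathlib

/-- Differential operators of order `≤ d`, defined inductively: order `≤ 0` means
`A`-linear, and `P` has order `≤ d+1` iff `[P, a]` has order `≤ d` for every `a ∈ A`. -/
def IsDiffOpOfOrder {k A : Type*} [CommRing k] [CommRing A] [Algebra k A] :
    ℕ → Module.End k A → Prop
  | 0, P => ∀ a x : A, P (a * x) = a * P x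
  | d + 1, P => ∀ a : A,
      IsDiffOpOfOrder d (P * (LinearMap.mulLeft k a : Module.End k A) -
        (LinearMap.mulLeft k a : Module.End k A) * P)

/-- A Hasse–Schmidt derivation of length `m`. -/
def IsHS {k A : Type*} [CommRing k] [CommRing A] [Algebra k A]
    (m : ℕ) (D : ℕ → Module.End k A) : Prop :=
  D 0 = 1 ∧ ∀ n, 1 ≤ n → n ≤ m → ∀ x y : A,
    D n (x * y) = ∑ i ∈ Finset.range (n + 1), D i x * D (n - i) y

section Aux
variable {k A : Type*} [CommRing k] [CommRing A] [Algebra k A]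


lemma ord_zero (d : ℕ) : IsDiffOpOfOrder (k := k) (A := A) d 0 := by
  induction d with
  | zero => intro a x; simp
  | succ d ih => intro a; simpa using ih

lemma ord_sub {d : ℕ} {P Q : Module.End k A} (hP : IsDiffOpOfOrder d P)
    (hQ : IsDiffOpOfOrder d Q) : IsDiffOpOfOrder d (P - Q) := by
  induction d generalizing P Q with
  | zero => intro a x; simp [hP a x, hQ a x, mul_sub]
  | succ d ih =>
      intro a
      have e : (P - Q) * (LinearMap.mulLeft k a : Module.End k A) -
          (LinearMap.mulLeft k a : Module.End k A) * (P - Q) =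
          (P * LinearMap.mulLeft k a - LinearMap.mulLeft k a * P) -
          (Q * LinearMap.mulLeft k a - LinearMap.mulLeft k a * Q) := by simp only [mul_sub, sub_mul, mul_add, add_mul, mul_assoc, mul_neg, neg_mul]; abel
      rw [e]
      exact ih (hP a) (hQ a)

lemma ord_add {d : ℕ} {P Q : Module.End k A} (hP : IsDiffOpOfOrder d P)
    (hQ : IsDiffOpOfOrder d Q) : IsDiffOpOfOrder d (P + Q) := by
  have := ord_sub hP (ord_sub (ord_zero d) hQ)
  simpa using this

lemma ord_neg {d : ℕ} {P : Module.End k A} (hP : IsDiffOpOfOrder d P) :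
    IsDiffOpOfOrder d (-P) := by
  have := ord_sub (ord_zero d) hP
  simpa using this




lemma ord0_comm_mulLeft {P : Module.End k A} (hP : IsDiffOpOfOrder 0 P) (a : A) :
    P * (LinearMap.mulLeft k a : Module.End k A) = LinearMap.mulLeft k a * P := by
  ext x
  simp [Module.End.mul_apply, hP a x]

lemma ord_succ {d : ℕ} {P : Module.End k A} (hP : IsDiffOpOfOrder d P) :
    IsDiffOpOfOrder (d + 1) P := by
  induction d generalizing P with
  | zero =>
      intro a
      rw [ord0_comm_mulLeft hP a, sub_self]
      exact ord_zero 0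
  | succ d ih => intro a; exact ih (hP a)

lemma ord_le {d e : ℕ} {P : Module.End k A} (hde : d ≤ e) (hP : IsDiffOpOfOrder d P) :
    IsDiffOpOfOrder e P := by
  induction e with
  | zero => obtain rfl : d = 0 := by omega
            exact hP
  | succ e ih =>
      rcases Nat.eq_or_lt_of_le hde with h | h
      · subst h; exact hP
      · exact ord_succ (ih (by omega))

lemma ord_mulLeft (b : A) : IsDiffOpOfOrder 0 (LinearMap.mulLeft k b : Module.End k A) := by
  intro a x
  simp [mul_left_comm]

lemma ord_sum {d : ℕ} {ι : Type*} (s : Finset ι) (f : ι → Module.End k A)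
    (h : ∀ i ∈ s, IsDiffOpOfOrder d (f i)) : IsDiffOpOfOrder d (∑ i ∈ s, f i) :=
  Finset.sum_induction f _ (fun _ _ ha hb => ord_add ha hb) (ord_zero d) h

lemma ord0_eq_mulLeft {P : Module.End k A} (hP : IsDiffOpOfOrder 0 P) :
    P = LinearMap.mulLeft k (P 1) := by
  ext x
  have := hP x 1
  simp only [mul_one] at this
  simp [this, mul_comm]




private lemma ord_comp_aux : ∀ N dP dQ (P Q : Module.End k A), dP + dQ ≤ N →
    IsDiffOpOfOrder dP P → IsDiffOpOfOrder dQ Q → IsDiffOpOfOrder (dP + dQ) (P * Q) := by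
  intro N
  induction N with
  | zero =>
      intro dP dQ P Q hle hP hQ
      obtain rfl : dP = 0 := by omega
      obtain rfl : dQ = 0 := by omega
      intro a x
      simp [Module.End.mul_apply, hQ a x, hP a (Q x)]
  | succ N ih =>
      intro dP dQ P Q hle hP hQ
      match dP, dQ with
      | 0, 0 =>
          intro a x
          simp [Module.End.mul_apply, hQ a x, hP a (Q x)]
      | 0, q + 1 =>
          intro a
          have e : (P * Q) * (LinearMap.mulLeft k a : Module.End k A) -
              (LinearMap.mulLeft k a : Module.End k A) * (P * Q) =
              P * (Q * LinearMap.mulLeft k a - LinearMap.mulLeft k a * Q) +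
              (P * LinearMap.mulLeft k a - LinearMap.mulLeft k a * P) * Q := by simp only [mul_sub, sub_mul, mul_add, add_mul, mul_assoc, mul_neg, neg_mul]; abel
          rw [e, ord0_comm_mulLeft hP a, sub_self, zero_mul, add_zero]
          exact ih 0 q P _ (by omega) hP (hQ a)
      | p + 1, dQ =>
          rw [show (p + 1) + dQ = (p + dQ) + 1 by omega]
          intro a
          have e : (P * Q) * (LinearMap.mulLeft k a : Module.End k A) -
              (LinearMap.mulLeft k a : Module.End k A) * (P * Q) =
              (P * LinearMap.mulLeft k a - LinearMap.mulLeft k a * P) * Q +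
              P * (Q * LinearMap.mulLeft k a - LinearMap.mulLeft k a * Q) := by simp only [mul_sub, sub_mul, mul_add, add_mul, mul_assoc, mul_neg, neg_mul]; abel
          rw [e]
          refine ord_add (ih p dQ _ Q (by omega) (hP a) hQ) ?_
          match dQ with
          | 0 =>
              rw [ord0_comm_mulLeft hQ a, sub_self, mul_zero]
              exact ord_zero _
          | q + 1 =>
              exact ord_le (by omega) (ih (p + 1) q P _ (by omega) hP (hQ a))

lemma ord_comp {dP dQ : ℕ} {P Q : Module.End k A} (hP : IsDiffOpOfOrder dP P)
    (hQ : IsDiffOpOfOrder dQ Q) : IsDiffOpOfOrder (dP + dQ) (P * Q) :=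
  ord_comp_aux (dP + dQ) dP dQ P Q le_rfl hP hQ

private lemma ord_comm_aux : ∀ N dP dQ (P Q : Module.End k A), dP + dQ ≤ N →
    IsDiffOpOfOrder dP P → IsDiffOpOfOrder dQ Q →
    IsDiffOpOfOrder (dP + dQ - 1) (P * Q - Q * P) := by
  intro N
  induction N with
  | zero =>
      intro dP dQ P Q hle hP hQ
      obtain rfl : dP = 0 := by omega
      obtain rfl : dQ = 0 := by omega
      intro a x
      simp [LinearMap.sub_apply, Module.End.mul_apply, hQ a x, hP a (Q x), hP a x, hQ a (P x),
        mul_sub]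
  | succ N ih =>
      intro dP dQ P Q hle hP hQ
      match dP, dQ with
      | 0, 0 =>
          intro a x
          simp [LinearMap.sub_apply, Module.End.mul_apply, hQ a x, hP a (Q x), hP a x, hQ a (P x),
            mul_sub]
      | 0, q + 1 =>
          show IsDiffOpOfOrder (0 + q) _
          rw [ord0_eq_mulLeft hP]
          have e : (LinearMap.mulLeft k (P 1) : Module.End k A) * Q -
              Q * LinearMap.mulLeft k (P 1) =
              -(Q * LinearMap.mulLeft k (P 1) - LinearMap.mulLeft k (P 1) * Q) := by noncomm_ring
          rw [e]
          exact ord_le (by omega) (ord_neg (hQ (P 1)))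
      | p + 1, 0 =>
          show IsDiffOpOfOrder p _
          rw [ord0_eq_mulLeft hQ]
          exact hP (Q 1)
      | p + 1, q + 1 =>
          rw [show (p + 1) + (q + 1) - 1 = (p + q) + 1 by omega]
          intro a
          have e : (P * Q - Q * P) * (LinearMap.mulLeft k a : Module.End k A) -
              (LinearMap.mulLeft k a : Module.End k A) * (P * Q - Q * P) =
              ((P * LinearMap.mulLeft k a - LinearMap.mulLeft k a * P) * Q -
                Q * (P * LinearMap.mulLeft k a - LinearMap.mulLeft k a * P)) +
              (P * (Q * LinearMap.mulLeft k a - LinearMap.mulLeft k a * Q) -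
                (Q * LinearMap.mulLeft k a - LinearMap.mulLeft k a * Q) * P) := by simp only [mul_sub, sub_mul, mul_add, add_mul, mul_assoc, mul_neg, neg_mul]; abel
          rw [e]
          refine ord_add (ord_le (by omega) (ih p (q + 1) _ Q (by omega) (hP a) hQ))
            (ord_le (by omega) (ih (p + 1) q P _ (by omega) hP (hQ a)))

lemma ord_comm {dP dQ : ℕ} {P Q : Module.End k A} (hP : IsDiffOpOfOrder dP P)
    (hQ : IsDiffOpOfOrder dQ Q) : IsDiffOpOfOrder (dP + dQ - 1) (P * Q - Q * P) :=
  ord_comm_aux (dP + dQ) dP dQ P Q le_rfl hP hQ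




lemma hs_mono {m m' : ℕ} {D : ℕ → Module.End k A} (hD : IsHS m D) (h : m' ≤ m) :
    IsHS m' D :=
  ⟨hD.1, fun n h1 h2 => hD.2 n h1 (h2.trans h)⟩

lemma hs_expand {m : ℕ} {D : ℕ → Module.End k A} (hD : IsHS m D) {i : ℕ}
    (hi : 1 ≤ i) (him : i ≤ m) (a : A) :
    D i * (LinearMap.mulLeft k a : Module.End k A) -
      (LinearMap.mulLeft k a : Module.End k A) * D i =
    LinearMap.mulLeft k (D 1 a) * D (i - 1) +
      ∑ j ∈ Finset.range (i - 1), LinearMap.mulLeft k (D (j + 2) a) * D (i - 2 - j) := by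
  obtain ⟨i', rfl⟩ : ∃ i', i = i' + 1 := ⟨i - 1, by omega⟩
  ext x
  simp only [LinearMap.sub_apply, Module.End.mul_apply, LinearMap.mulLeft_apply,
    LinearMap.add_apply, LinearMap.coe_sum, Finset.sum_apply]
  rw [hD.2 (i' + 1) hi him a x, Finset.sum_range_succ']
  have h0 : D 0 a * D (i' + 1 - 0) x = a * D (i' + 1) x := by
    rw [hD.1]; simp
  rw [h0, add_sub_cancel_right]
  rcases Nat.eq_zero_or_pos i' with rfl | hi'
  · simp
  · obtain ⟨i'', rfl⟩ : ∃ i'', i' = i'' + 1 := ⟨i' - 1, by omega⟩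
    rw [Finset.sum_range_succ', add_comm]
    congr 1
    apply Finset.sum_congr rfl
    intro j hj
    congr 3 <;> omega

lemma hs_ord {m : ℕ} {D : ℕ → Module.End k A} (hD : IsHS m D) :
    ∀ i, i ≤ m → IsDiffOpOfOrder i (D i) := by
  intro i
  induction i using Nat.strong_induction_on with
  | _ i ih =>
    intro him
    match i with
    | 0 =>
        rw [hD.1]
        intro a x
        simp
    | i + 1 =>
        intro a
        rw [hs_expand hD (by omega) him a]
        refine ord_add ?_ (ord_sum _ _ ?_)
        · exact ord_le (by omega)
            (ord_comp (ord_mulLeft _) (ih (i + 1 - 1) (by omega) (by omega)))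
        · intro j hj
          simp only [Finset.mem_range] at hj
          exact ord_le (by omega)
            (ord_comp (ord_mulLeft _) (ih (i + 1 - 2 - j) (by omega) (by omega)))

/-- remainder order: `[D i, μ_a] - μ_{D 1 a} D_{i-1}` has order `≤ i - 2`. -/
lemma hs_rem_ord {m : ℕ} {D : ℕ → Module.End k A} (hD : IsHS m D) {i : ℕ}
    (hi : 1 ≤ i) (him : i ≤ m) (a : A) :
    IsDiffOpOfOrder (i - 2)
      (D i * (LinearMap.mulLeft k a : Module.End k A) -
        (LinearMap.mulLeft k a : Module.End k A) * D i -
        LinearMap.mulLeft k (D 1 a) * D (i - 1)) := by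
  rw [hs_expand hD hi him a, add_sub_cancel_left]
  refine ord_sum _ _ ?_
  intro j hj
  simp only [Finset.mem_range] at hj
  exact ord_le (by omega) (ord_comp (ord_mulLeft _) (hs_ord hD (i - 2 - j) (by omega)))

/-- remainder is zero when `i = 1`. -/
lemma hs_rem_one {m : ℕ} {D : ℕ → Module.End k A} (hD : IsHS m D)
    (hm : 1 ≤ m) (a : A) :
    D 1 * (LinearMap.mulLeft k a : Module.End k A) -
      (LinearMap.mulLeft k a : Module.End k A) * D 1 =
      LinearMap.mulLeft k (D 1 a) := by
  have := hs_expand hD le_rfl hm a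
  simpa [hD.1] using this




/-- `[D₁, D'₁]` is a derivation, in commutator-with-`mulLeft` form. -/
lemma cop_deriv {m n : ℕ} {D D' : ℕ → Module.End k A} (hD : IsHS m D) (hD' : IsHS n D')
    (hm : 1 ≤ m) (hn : 1 ≤ n) (a : A) :
    (D 1 * D' 1 - D' 1 * D 1) * (LinearMap.mulLeft k a : Module.End k A) -
      (LinearMap.mulLeft k a : Module.End k A) * (D 1 * D' 1 - D' 1 * D 1) =
    LinearMap.mulLeft k ((D 1 * D' 1 - D' 1 * D 1) a) := by
  have e1 : (D 1 * D' 1 - D' 1 * D 1) * (LinearMap.mulLeft k a : Module.End k A) -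
      (LinearMap.mulLeft k a : Module.End k A) * (D 1 * D' 1 - D' 1 * D 1) =
      (D 1 * (D' 1 * LinearMap.mulLeft k a - LinearMap.mulLeft k a * D' 1) -
        (D' 1 * LinearMap.mulLeft k a - LinearMap.mulLeft k a * D' 1) * D 1) -
      (D' 1 * (D 1 * LinearMap.mulLeft k a - LinearMap.mulLeft k a * D 1) -
        (D 1 * LinearMap.mulLeft k a - LinearMap.mulLeft k a * D 1) * D' 1) := by
    simp only [mul_sub, sub_mul, mul_add, add_mul, mul_assoc, mul_neg, neg_mul]; abel
  rw [e1, hs_rem_one hD hm a, hs_rem_one hD' hn a, hs_rem_one hD hm (D' 1 a),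
    hs_rem_one hD' hn (D 1 a)]
  ext x
  simp [mul_sub, sub_mul]

lemma mulLeft_split {m n : ℕ} {D D' : ℕ → Module.End k A} (hD : IsHS m D) (hD' : IsHS n D')
    (a : A) :
    LinearMap.mulLeft k (D 1 (D' 1 a)) =
      (LinearMap.mulLeft k ((D 1 * D' 1 - D' 1 * D 1) a) : Module.End k A) +
      LinearMap.mulLeft k (D' 1 (D 1 a)) := by
  ext x
  simp [sub_mul, Module.End.mul_apply]



lemma key_one : ∀ n, 1 ≤ n → ∀ (D D' : ℕ → Module.End k A), IsHS 1 D → IsHS n D' →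
    IsDiffOpOfOrder (n - 1)
      ((D 1 * D' n - D' n * D 1) - D 0 * D' (n - 1) * (D 1 * D' 1 - D' 1 * D 1)) := by
  intro n hn
  induction n, hn using Nat.le_induction with
  | base =>
      intro D D' hD hD'
      have e : (D 1 * D' 1 - D' 1 * D 1) -
          D 0 * D' (1 - 1) * (D 1 * D' 1 - D' 1 * D 1) = 0 := by
        show (D 1 * D' 1 - D' 1 * D 1) - D 0 * D' 0 * (D 1 * D' 1 - D' 1 * D 1) = 0
        rw [hD.1, hD'.1]; noncomm_ring
      rw [e]; exact ord_zero _
  | succ n hn ihn =>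
      intro D D' hD hD'
      obtain ⟨s, rfl⟩ : ∃ s, n = s + 1 := ⟨n - 1, by omega⟩
      simp only [Nat.add_sub_cancel]
      rw [hD.1, one_mul]
      -- goal : ord (s+1) ((D 1 * D' (s+2) - D' (s+2) * D 1) - D' (s+1) * Cop)
      intro a
      have hT : IsDiffOpOfOrder s
          ((D 1 * D' (s + 1) - D' (s + 1) * D 1) -
            D' s * (D 1 * D' 1 - D' 1 * D 1)) := by
        have h := ihn D D' hD (hs_mono hD' (by omega))
        simp only [Nat.add_sub_cancel, hD.1, one_mul] at h
        exact h
      have hCop : IsDiffOpOfOrder 1 (D 1 * D' 1 - D' 1 * D 1) :=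
        ord_comm (hs_ord hD 1 le_rfl) (hs_ord hD' 1 (by omega))
      have hS : IsDiffOpOfOrder s
          (D' (s + 2) * (LinearMap.mulLeft k a : Module.End k A) -
            (LinearMap.mulLeft k a : Module.End k A) * D' (s + 2) -
            LinearMap.mulLeft k (D' 1 a) * D' (s + 1)) :=
        hs_rem_ord hD' (by omega) le_rfl a
      have hS' : IsDiffOpOfOrder s
          (D' (s + 2) * (LinearMap.mulLeft k (D 1 a) : Module.End k A) -
            (LinearMap.mulLeft k (D 1 a) : Module.End k A) * D' (s + 2) -
            LinearMap.mulLeft k (D' 1 (D 1 a)) * D' (s + 1)) :=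
        hs_rem_ord hD' (by omega) le_rfl (D 1 a)
      have hS2C : IsDiffOpOfOrder s
          ((D' (s + 1) * (LinearMap.mulLeft k a : Module.End k A) -
            (LinearMap.mulLeft k a : Module.End k A) * D' (s + 1) -
            LinearMap.mulLeft k (D' 1 a) * D' s) * (D 1 * D' 1 - D' 1 * D 1)) := by
        rcases Nat.eq_zero_or_pos s with rfl | hs
        · have hz : D' (0 + 1) * (LinearMap.mulLeft k a : Module.End k A) -
              (LinearMap.mulLeft k a : Module.End k A) * D' (0 + 1) -
              LinearMap.mulLeft k (D' 1 a) * D' 0 = 0 := by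
            show D' 1 * (LinearMap.mulLeft k a : Module.End k A) -
              (LinearMap.mulLeft k a : Module.End k A) * D' 1 -
              LinearMap.mulLeft k (D' 1 a) * D' 0 = 0
            rw [hs_rem_one hD' (by omega) a, hD'.1, mul_one, sub_self]
          rw [hz, zero_mul]
          exact ord_zero _
        · have h1 := hs_rem_ord hD' (i := s + 1) (by omega) (by omega) a
          have := ord_comp h1 hCop
          exact ord_le (by omega) this
      have hX : D 1 * (LinearMap.mulLeft k a : Module.End k A) -
          (LinearMap.mulLeft k a : Module.End k A) * D 1 -
          LinearMap.mulLeft k (D 1 a) = 0 :=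
        sub_eq_zero_of_eq (hs_rem_one hD le_rfl a)
      have hY : D 1 * (LinearMap.mulLeft k (D' 1 a) : Module.End k A) -
          (LinearMap.mulLeft k (D' 1 a) : Module.End k A) * D 1 -
          LinearMap.mulLeft k ((D 1 * D' 1 - D' 1 * D 1) a) -
          LinearMap.mulLeft k (D' 1 (D 1 a)) = 0 := by
        rw [hs_rem_one hD le_rfl (D' 1 a), mulLeft_split hD hD' a]
        abel
      have hZ : (D 1 * D' 1 - D' 1 * D 1) * (LinearMap.mulLeft k a : Module.End k A) -
          (LinearMap.mulLeft k a : Module.End k A) * (D 1 * D' 1 - D' 1 * D 1) -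
          LinearMap.mulLeft k ((D 1 * D' 1 - D' 1 * D 1) a) = 0 :=
        sub_eq_zero_of_eq (cop_deriv hD hD' le_rfl (by omega) a)
      have key : ((D 1 * D' (s + 2) - D' (s + 2) * D 1) -
            D' (s + 1) * (D 1 * D' 1 - D' 1 * D 1)) *
            (LinearMap.mulLeft k a : Module.End k A) -
          (LinearMap.mulLeft k a : Module.End k A) *
            ((D 1 * D' (s + 2) - D' (s + 2) * D 1) -
            D' (s + 1) * (D 1 * D' 1 - D' 1 * D 1)) =
          ((((LinearMap.mulLeft k (D' 1 a) *
              ((D 1 * D' (s + 1) - D' (s + 1) * D 1) -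
                D' s * (D 1 * D' 1 - D' 1 * D 1)) +
            (D 1 * (D' (s + 2) * (LinearMap.mulLeft k a : Module.End k A) -
                (LinearMap.mulLeft k a : Module.End k A) * D' (s + 2) -
                LinearMap.mulLeft k (D' 1 a) * D' (s + 1)) -
              (D' (s + 2) * (LinearMap.mulLeft k a : Module.End k A) -
                (LinearMap.mulLeft k a : Module.End k A) * D' (s + 2) -
                LinearMap.mulLeft k (D' 1 a) * D' (s + 1)) * D 1)) -
            (D' (s + 2) * (LinearMap.mulLeft k (D 1 a) : Module.End k A) -
              (LinearMap.mulLeft k (D 1 a) : Module.End k A) * D' (s + 2) -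
              LinearMap.mulLeft k (D' 1 (D 1 a)) * D' (s + 1))) -
            (D' (s + 1) * (LinearMap.mulLeft k a : Module.End k A) -
              (LinearMap.mulLeft k a : Module.End k A) * D' (s + 1) -
              LinearMap.mulLeft k (D' 1 a) * D' s) * (D 1 * D' 1 - D' 1 * D 1)) -
            (D' (s + 1) * LinearMap.mulLeft k ((D 1 * D' 1 - D' 1 * D 1) a) -
              LinearMap.mulLeft k ((D 1 * D' 1 - D' 1 * D 1) a) * D' (s + 1))) +
          ((D 1 * (LinearMap.mulLeft k a : Module.End k A) -
              (LinearMap.mulLeft k a : Module.End k A) * D 1 -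
              LinearMap.mulLeft k (D 1 a)) * D' (s + 2) -
            D' (s + 2) * (D 1 * (LinearMap.mulLeft k a : Module.End k A) -
              (LinearMap.mulLeft k a : Module.End k A) * D 1 -
              LinearMap.mulLeft k (D 1 a))) +
          (D 1 * (LinearMap.mulLeft k (D' 1 a) : Module.End k A) -
            (LinearMap.mulLeft k (D' 1 a) : Module.End k A) * D 1 -
            LinearMap.mulLeft k ((D 1 * D' 1 - D' 1 * D 1) a) -
            LinearMap.mulLeft k (D' 1 (D 1 a))) * D' (s + 1) -
          D' (s + 1) * ((D 1 * D' 1 - D' 1 * D 1) *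
              (LinearMap.mulLeft k a : Module.End k A) -
            (LinearMap.mulLeft k a : Module.End k A) * (D 1 * D' 1 - D' 1 * D 1) -
            LinearMap.mulLeft k ((D 1 * D' 1 - D' 1 * D 1) a)) := by
        simp only [mul_sub, sub_mul, mul_add, add_mul, mul_assoc, mul_neg, neg_mul]; abel
      rw [key, hX, hY, hZ]
      simp only [zero_mul, mul_zero, sub_zero, add_zero]
      refine ord_sub (ord_sub (ord_sub (ord_add
        (ord_le (by omega) (ord_comp (ord_mulLeft _) hT))
        (ord_le (by omega) (ord_comm (hs_ord hD 1 le_rfl) hS))) hS') hS2C)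
        (ord_le (by omega) (ord_comm (hs_ord hD' (s + 1) (by omega)) (ord_mulLeft _)))


lemma key_main : ∀ N m n : ℕ, m + n ≤ N → 1 ≤ m → 1 ≤ n →
    ∀ (D D' : ℕ → Module.End k A), IsHS m D → IsHS n D' →
    IsDiffOpOfOrder (m + n - 2)
      ((D m * D' n - D' n * D m) -
        D (m - 1) * D' (n - 1) * (D 1 * D' 1 - D' 1 * D 1)) := by
  intro N
  induction N with
  | zero => intro m n h hm hn; omega
  | succ N ih =>
    intro m n hmn hm hn D D' hD hD'
    rcases eq_or_lt_of_le hn with h1 | hn2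
    · -- n = 1, by symmetry from key_one
      obtain rfl : n = 1 := h1.symm
      have hF := key_one m hm D' D hD' hD
      rw [hD'.1, one_mul] at hF
      rw [show m + 1 - 2 = m - 1 by omega, show (1 : ℕ) - 1 = 0 by omega, hD'.1, mul_one]
      have e : (D m * D' 1 - D' 1 * D m) - D (m - 1) * (D 1 * D' 1 - D' 1 * D 1) =
          -((D' 1 * D m - D m * D' 1) -
            D (m - 1) * (D' 1 * D 1 - D 1 * D' 1)) := by simp only [mul_sub, sub_mul, mul_add, add_mul, mul_assoc, mul_neg, neg_mul]; abel
      rw [e]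
      exact ord_neg hF
    · rcases eq_or_lt_of_le hm with h1 | hm2
      · -- m = 1, by key_one
        obtain rfl : m = 1 := h1.symm
        rw [show 1 + n - 2 = n - 1 by omega, show (1 : ℕ) - 1 = 0 by omega]
        exact key_one n hn D D' hD hD'
      · -- m, n ≥ 2
        have hP : IsDiffOpOfOrder m (D m) := hs_ord hD m le_rfl
        have hQ : IsDiffOpOfOrder n (D' n) := hs_ord hD' n le_rfl
        have hp : IsDiffOpOfOrder (m - 1) (D (m - 1)) := hs_ord hD (m - 1) (by omega)
        have hq : IsDiffOpOfOrder (n - 1) (D' (n - 1)) := hs_ord hD' (n - 1) (by omega)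
        have hq2 : IsDiffOpOfOrder (n - 2) (D' (n - 2)) := hs_ord hD' (n - 2) (by omega)
        have hC : IsDiffOpOfOrder 1 (D 1 * D' 1 - D' 1 * D 1) :=
          ord_comm (hs_ord hD 1 (by omega)) (hs_ord hD' 1 (by omega))
        rw [show m + n - 2 = (m + n - 3) + 1 by omega]
        intro a
        have hT : IsDiffOpOfOrder (m + n - 3) (D (m - 1) * D' n - D' n * D (m - 1) - D (m - 2) * D' (n - 1) * (D 1 * D' 1 - D' 1 * D 1)) := by
          have h := ih (m - 1) n (by omega) (by omega) hn D D' (hs_mono hD (by omega)) hD'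
          rw [show (m - 1) + n - 2 = m + n - 3 by omega, show m - 1 - 1 = m - 2 by omega] at h
          exact h
        have hT2 : IsDiffOpOfOrder (m + n - 3) (D m * D' (n - 1) - D' (n - 1) * D m - D (m - 1) * D' (n - 2) * (D 1 * D' 1 - D' 1 * D 1)) := by
          have h := ih m (n - 1) (by omega) hm (by omega) D D' hD (hs_mono hD' (by omega))
          rw [show m + (n - 1) - 2 = m + n - 3 by omega, show n - 1 - 1 = n - 2 by omega] at h
          exact h
        have hR : IsDiffOpOfOrder (m - 2) (D m * (LinearMap.mulLeft k a : Module.End k A) - (LinearMap.mulLeft k a : Module.End k A) * D m - LinearMap.mulLeft k (D 1 a) * D (m - 1)) := hs_rem_ord hD hm le_rfl a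
        have hS : IsDiffOpOfOrder (n - 2) (D' n * (LinearMap.mulLeft k a : Module.End k A) - (LinearMap.mulLeft k a : Module.End k A) * D' n - LinearMap.mulLeft k (D' 1 a) * D' (n - 1)) := hs_rem_ord hD' hn le_rfl a
        have hSp : IsDiffOpOfOrder (n - 2) (D' n * LinearMap.mulLeft k (D 1 a) - LinearMap.mulLeft k (D 1 a) * D' n - LinearMap.mulLeft k (D' 1 (D 1 a)) * D' (n - 1)) := hs_rem_ord hD' hn le_rfl (D 1 a)
        have hRp : IsDiffOpOfOrder (m - 2) (D m * LinearMap.mulLeft k (D' 1 a) - LinearMap.mulLeft k (D' 1 a) * D m - LinearMap.mulLeft k (D 1 (D' 1 a)) * D (m - 1)) := hs_rem_ord hD hm le_rfl (D' 1 a)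
        have hR2C : IsDiffOpOfOrder (m + n - 3) ((D (m - 1) * (LinearMap.mulLeft k a : Module.End k A) - (LinearMap.mulLeft k a : Module.End k A) * D (m - 1) - LinearMap.mulLeft k (D 1 a) * D (m - 2)) * D' (n - 1) * (D 1 * D' 1 - D' 1 * D 1)) := by
          rcases Nat.lt_or_ge m 3 with hm3 | hm3
          · obtain rfl : m = 2 := by omega
            have hz : (D (2 - 1) * (LinearMap.mulLeft k a : Module.End k A) - (LinearMap.mulLeft k a : Module.End k A) * D (2 - 1) - LinearMap.mulLeft k (D 1 a) * D (2 - 2)) = 0 := by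
              show D 1 * (LinearMap.mulLeft k a : Module.End k A) - (LinearMap.mulLeft k a : Module.End k A) * D 1 - LinearMap.mulLeft k (D 1 a) * D 0 = 0
              rw [hs_rem_one hD (by omega) a, hD.1, mul_one, sub_self]
            rw [hz, zero_mul, zero_mul]
            exact ord_zero _
          · have h := hs_rem_ord hD (i := m - 1) (by omega) (by omega) a
            rw [show m - 1 - 1 = m - 2 by omega] at h
            rw [show m - 1 - 2 = m - 3 by omega] at h
            exact ord_le (by omega) (ord_comp (ord_comp h hq) hC)
        have hS2C : IsDiffOpOfOrder (m + n - 3) (D (m - 1) * (D' (n - 1) * (LinearMap.mulLeft k a : Module.End k A) - (LinearMap.mulLeft k a : Module.End k A) * D' (n - 1) - LinearMap.mulLeft k (D' 1 a) * D' (n - 2)) * (D 1 * D' 1 - D' 1 * D 1)) := by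
          rcases Nat.lt_or_ge n 3 with hn3 | hn3
          · obtain rfl : n = 2 := by omega
            have hz : (D' (2 - 1) * (LinearMap.mulLeft k a : Module.End k A) - (LinearMap.mulLeft k a : Module.End k A) * D' (2 - 1) - LinearMap.mulLeft k (D' 1 a) * D' (2 - 2)) = 0 := by
              show D' 1 * (LinearMap.mulLeft k a : Module.End k A) - (LinearMap.mulLeft k a : Module.End k A) * D' 1 - LinearMap.mulLeft k (D' 1 a) * D' 0 = 0
              rw [hs_rem_one hD' (by omega) a, hD'.1, mul_one, sub_self]
            rw [hz, mul_zero, zero_mul]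
            exact ord_zero _
          · have h := hs_rem_ord hD' (i := n - 1) (by omega) (by omega) a
            rw [show n - 1 - 1 = n - 2 by omega] at h
            rw [show n - 1 - 2 = n - 3 by omega] at h
            exact ord_le (by omega) (ord_comp (ord_comp hp h) hC)
        have hW : (LinearMap.mulLeft k (D 1 (D' 1 a)) - LinearMap.mulLeft k ((D 1 * D' 1 - D' 1 * D 1) a) - LinearMap.mulLeft k (D' 1 (D 1 a))) = 0 := by
          rw [mulLeft_split hD hD' a]; abel
        have hZ : ((D 1 * D' 1 - D' 1 * D 1) * (LinearMap.mulLeft k a : Module.End k A) - (LinearMap.mulLeft k a : Module.End k A) * (D 1 * D' 1 - D' 1 * D 1) - LinearMap.mulLeft k ((D 1 * D' 1 - D' 1 * D 1) a)) = 0 :=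
          sub_eq_zero_of_eq (cop_deriv hD hD' (by omega) (by omega) a)
        have key : ((D m * D' n - D' n * D m) - D (m - 1) * D' (n - 1) * (D 1 * D' 1 - D' 1 * D 1)) * (LinearMap.mulLeft k a : Module.End k A) - (LinearMap.mulLeft k a : Module.End k A) * ((D m * D' n - D' n * D m) - D (m - 1) * D' (n - 1) * (D 1 * D' 1 - D' 1 * D 1)) = LinearMap.mulLeft k (D 1 a) * (D (m - 1) * D' n - D' n * D (m - 1) - D (m - 2) * D' (n - 1) * (D 1 * D' 1 - D' 1 * D 1)) + LinearMap.mulLeft k (D' 1 a) * (D m * D' (n - 1) - D' (n - 1) * D m - D (m - 1) * D' (n - 2) * (D 1 * D' 1 - D' 1 * D 1)) + ((D m * (LinearMap.mulLeft k a : Module.End k A) - (LinearMap.mulLeft k a : Module.End k A) * D m - LinearMap.mulLeft k (D 1 a) * D (m - 1)) * D' n - D' n * (D m * (LinearMap.mulLeft k a : Module.End k A) - (LinearMap.mulLeft k a : Module.End k A) * D m - LinearMap.mulLeft k (D 1 a) * D (m - 1))) + (D m * (D' n * (LinearMap.mulLeft k a : Module.End k A) - (LinearMap.mulLeft k a : Module.End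 k A) * D' n - LinearMap.mulLeft k (D' 1 a) * D' (n - 1)) - (D' n * (LinearMap.mulLeft k a : Module.End k A) - (LinearMap.mulLeft k a : Module.End k A) * D' n - LinearMap.mulLeft k (D' 1 a) * D' (n - 1)) * D m) - (D' n * LinearMap.mulLeft k (D 1 a) - LinearMap.mulLeft k (D 1 a) * D' n - LinearMap.mulLeft k (D' 1 (D 1 a)) * D' (n - 1)) * D (m - 1) + (D m * LinearMap.mulLeft k (D' 1 a) - LinearMap.mulLeft k (D' 1 a) * D m - LinearMap.mulLeft k (D 1 (D' 1 a)) * D (m - 1)) * D' (n - 1) - (D (m - 1) * (LinearMap.mulLeft k a : Module.End k A) - (LinearMap.mulLeft k a : Module.End k A) * D (m - 1) - LinearMap.mulLeft k (D 1 a) * D (m - 2)) * D' (n - 1) * (D 1 * D' 1 - D' 1 * D 1) - D (m - 1) * (D' (n - 1) * (LinearMap.mulLeft k a : Module.End k A) - (LinearMap.mulLeft k a : Module.End k A) * D' (n - 1) - LinearMap.mulLeft k (D' 1 a) * D' (n - 2)) * (D 1 * D' 1 - D' 1 * D 1) - (D (m - 1) * LinearMap.mulLeft k (D' 1 a) - LinearMap.mulLeft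 k (D' 1 a) * D (m - 1)) * D' (n - 2) * (D 1 * D' 1 - D' 1 * D 1) + LinearMap.mulLeft k (D' 1 (D 1 a)) * (D (m - 1) * D' (n - 1) - D' (n - 1) * D (m - 1)) - (D (m - 1) * D' (n - 1) * LinearMap.mulLeft k ((D 1 * D' 1 - D' 1 * D 1) a) - LinearMap.mulLeft k ((D 1 * D' 1 - D' 1 * D 1) a) * (D (m - 1) * D' (n - 1))) + (LinearMap.mulLeft k (D 1 (D' 1 a)) - LinearMap.mulLeft k ((D 1 * D' 1 - D' 1 * D 1) a) - LinearMap.mulLeft k (D' 1 (D 1 a))) * (D (m - 1) * D' (n - 1)) - (D (m - 1) * D' (n - 1)) * ((D 1 * D' 1 - D' 1 * D 1) * (LinearMap.mulLeft k a : Module.End k A) - (LinearMap.mulLeft k a : Module.End k A) * (D 1 * D' 1 - D' 1 * D 1) - LinearMap.mulLeft k ((D 1 * D' 1 - D' 1 * D 1) a)) := by simp only [mul_sub, sub_mul, mul_add, add_mul, mul_assoc, mul_neg, neg_mul]; abel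
        rw [key, hW, hZ]
        simp only [zero_mul, mul_zero, sub_zero, add_zero]
        refine ord_sub (ord_add (ord_sub (ord_sub (ord_sub (ord_add (ord_sub (ord_add
          (ord_add (ord_add
            (ord_le (by omega) (ord_comp (ord_mulLeft _) hT))
            (ord_le (by omega) (ord_comp (ord_mulLeft _) hT2)))
            (ord_le (by omega) (ord_comm hR hQ)))
            (ord_le (by omega) (ord_comm hP hS)))
            (ord_le (by omega) (ord_comp hSp hp)))
            (ord_le (by omega) (ord_comp hRp hq)))
            hR2C) hS2C)
            (ord_le (by omega) (ord_comp (ord_comp (ord_comm hp (ord_mulLeft _)) hq2) hC)))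
            (ord_le (by omega) (ord_comp (ord_mulLeft _) (ord_comm hp hq))))
            (ord_le (by omega) (ord_comm (ord_comp hp hq) (ord_mulLeft _)))


end Aux

/-- For HS-derivations `D` of length `m` and `D'` of length `n`, the operator
`[D_m, D'_n] − D_{m−1} ∘ D'_{n−1} ∘ [D₁, D'₁]` has order `≤ m + n − 2`. -/
theorem commutator_order (k A : Type*) [CommRing k] [CommRing A] [Algebra k A]
    (m n : ℕ) (hm : 1 ≤ m) (hn : 1 ≤ n)
    (D D' : ℕ → Module.End k A) (hD : IsHS m D) (hD' : IsHS n D') :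
    IsDiffOpOfOrder (m + n - 2)
      ((D m * D' n - D' n * D m) -
        D (m - 1) * D' (n - 1) * (D 1 * D' 1 - D' 1 * D 1)) := by
  exact key_main (m + n) m n le_rfl hm hn D D' hD hD'
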